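/- arXiv:1706.02826 — 2 statements merged into one kernel-verified Lean document; each statement's English description precedes it below -/
import Mathlib

section
/- Fourier symbol of the left tempered fractional integral: for u ∈ L²(ℝ) ∩ L¹(ℝ) and μ, λ > 0, the Fourier transform of x ↦ ({}_{−∞}I_x^{μ,λ}u)(x) equals ω ↦ (λ + iω)^{−μ}·û(ω), where û(ω) = ∫_{−∞}^{∞} e^{−iωx} u(x) dx. -/
open MeasureTheory Complex

private lemma real_kernel_int {s c : ℝ} (hs : 0 < s) (hc : 0 < c) :
    IntegrableOn (fun t : ℝ => t ^ (s - 1) * Real.exp (-(c * t))) (Set.Ioi 0) := by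
  have h := Real.GammaIntegral_convergent hs
  have h' : IntegrableOn (fun x : ℝ => Real.exp (-(c * x)) * (c * x) ^ (s - 1))
      (Set.Ioi 0) := by
    have := (integrableOn_Ioi_comp_mul_left_iff
      (fun x : ℝ => Real.exp (-x) * x ^ (s - 1)) 0 hc).mpr (by simpa using h)
    simpa using this
  have h2 := h'.const_mul (c ^ (1 - s))
  refine (IntegrableOn.congr_fun h2 (fun t ht => ?_) measurableSet_Ioi)
  rw [Set.mem_Ioi] at ht
  rw [Real.mul_rpow hc.le ht.le]
  rw [show c ^ (1 - s) * (Real.exp (-(c * t)) * (c ^ (s - 1) * t ^ (s - 1)))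
      = (c ^ (1 - s) * c ^ (s - 1)) * (t ^ (s - 1) * Real.exp (-(c * t))) by ring,
    ← Real.rpow_add hc]
  norm_num

private lemma cpx_kernel_cont {μ : ℝ} (z : ℂ) :
    ContinuousOn (fun t : ℝ => (t : ℂ) ^ ((μ : ℂ) - 1) * Complex.exp (-(z * t)))
      (Set.Ioi 0) := by
  apply ContinuousOn.mul
  · refine ContinuousOn.cpow Complex.continuous_ofReal.continuousOn
      continuousOn_const (fun t ht => ?_)
    exact Complex.ofReal_mem_slitPlane.mpr ht
  · exact (Complex.continuous_exp.comp (by fun_prop)).continuousOn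

private lemma cpx_kernel_norm {μ : ℝ} {z : ℂ} {t : ℝ} (ht : 0 < t) :
    ‖(t : ℂ) ^ ((μ : ℂ) - 1) * Complex.exp (-(z * t))‖
      = t ^ (μ - 1) * Real.exp (-(z.re * t)) := by
  rw [norm_mul,
    Complex.norm_cpow_eq_rpow_re_of_pos ht, Complex.norm_exp,
    show ((μ : ℂ) - 1).re = μ - 1 by simp,
    show (-(z * (t : ℂ))).re = -(z.re * t) by simp [Complex.mul_re]]

private lemma cpx_kernel_int {μ : ℝ} (hμ : 0 < μ) {z : ℂ} (hz : 0 < z.re) :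
    IntegrableOn (fun t : ℝ => (t : ℂ) ^ ((μ : ℂ) - 1) * Complex.exp (-(z * t)))
      (Set.Ioi 0) := by
  refine ((real_kernel_int hμ hz).mono' ?_ ?_)
  · exact (cpx_kernel_cont z).aestronglyMeasurable measurableSet_Ioi
  · refine (ae_restrict_iff' measurableSet_Ioi).2 (Filter.Eventually.of_forall fun t ht => ?_)
    rw [Set.mem_Ioi] at ht
    exact le_of_eq (cpx_kernel_norm ht)

private lemma gamma_formula {μ : ℝ} (hμ : 0 < μ) :
    ∀ z : ℂ, 0 < z.re →
      (∫ t in Set.Ioi (0 : ℝ), (t : ℂ) ^ ((μ : ℂ) - 1) * Complex.exp (-(z * t)))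
        = (Real.Gamma μ : ℂ) * z ^ (-(μ : ℂ)) := by
  set F : ℂ → ℂ := fun z => ∫ t in Set.Ioi (0 : ℝ),
    (t : ℂ) ^ ((μ : ℂ) - 1) * Complex.exp (-(z * t)) with hF
  set G : ℂ → ℂ := fun z => (Real.Gamma μ : ℂ) * z ^ (-(μ : ℂ)) with hG
  set U : Set ℂ := {z : ℂ | 0 < z.re} with hU
  have hUopen : IsOpen U := isOpen_lt continuous_const Complex.continuous_re
  have hUconv : Convex ℝ U := convex_halfSpace_re_gt 0
  have hGdiff : DifferentiableOn ℂ G U := by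
    intro z hz
    exact (((differentiableAt_id.cpow (differentiableAt_const _)
      (Or.inl hz)).const_mul _)).differentiableWithinAt
  have hFderiv : ∀ z₀ ∈ U, HasDerivAt F
      (∫ t in Set.Ioi (0 : ℝ),
        (t : ℂ) ^ ((μ : ℂ) - 1) * (Complex.exp (-(z₀ * t)) * (-(t : ℂ)))) z₀ := by
    intro z₀ hz₀
    have hz₀re : 0 < z₀.re := hz₀
    set c : ℝ := z₀.re / 2 with hc
    have hcpos : 0 < c := by positivity
    have key := hasDerivAt_integral_of_dominated_loc_of_deriv_le
      (μ := volume.restrict (Set.Ioi (0 : ℝ)))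
      (F := fun (z : ℂ) (t : ℝ) => (t : ℂ) ^ ((μ : ℂ) - 1) * Complex.exp (-(z * t)))
      (F' := fun (z : ℂ) (t : ℝ) =>
        (t : ℂ) ^ ((μ : ℂ) - 1) * (Complex.exp (-(z * t)) * (-(t : ℂ))))
      (x₀ := z₀) (s := Metric.ball z₀ c)
      (bound := fun t : ℝ => t ^ μ * Real.exp (-(c * t)))
      (Metric.ball_mem_nhds z₀ hcpos)
      (Filter.Eventually.of_forall fun z =>
        (cpx_kernel_cont z).aestronglyMeasurable measurableSet_Ioi)
      (cpx_kernel_int hμ hz₀re)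
      (((cpx_kernel_cont z₀).mul (Complex.continuous_ofReal.continuousOn.neg)).aestronglyMeasurable
        measurableSet_Ioi |>.congr (Filter.Eventually.of_forall fun t => by simp only [Pi.neg_apply, Pi.mul_apply]; ring))
      ?_ ?_ ?_
    · exact key.2
    · -- bound
      refine (ae_restrict_iff' measurableSet_Ioi).2
        (Filter.Eventually.of_forall fun t ht => fun z hz => ?_)
      rw [Set.mem_Ioi] at ht
      have hre : c ≤ z.re := by
        have h1 : |(z - z₀).re| ≤ ‖z - z₀‖ := Complex.abs_re_le_norm _
        have h2 : ‖z - z₀‖ < c := by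
          simpa [Complex.dist_eq] using hz
        have := abs_lt.mp (lt_of_le_of_lt h1 h2)
        simp only [Complex.sub_re] at this
        have := this.1
        rw [hc] at *
        linarith
      have hnorm : ‖(t : ℂ) ^ ((μ : ℂ) - 1) * (Complex.exp (-(z * t)) * (-(t : ℂ)))‖
          = t ^ μ * Real.exp (-(z.re * t)) := by
        rw [norm_mul, norm_mul, norm_neg]
        rw [Complex.norm_cpow_eq_rpow_re_of_pos ht]
        rw [Complex.norm_exp]
        rw [Complex.norm_real, Real.norm_of_nonneg ht.le]
        have : ((μ : ℂ) - 1).re = μ - 1 := by simp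
        rw [this]
        have : (-(z * (t : ℂ))).re = -(z.re * t) := by simp [Complex.mul_re]
        rw [this]
        rw [show t ^ (μ - 1) * (Real.exp (-(z.re * t)) * t)
            = (t ^ (μ - 1) * t) * Real.exp (-(z.re * t)) by ring]
        congr 1
        rw [← Real.rpow_add_one ht.ne' (μ - 1)]
        norm_num
      rw [hnorm]
      have : Real.exp (-(z.re * t)) ≤ Real.exp (-(c * t)) := by
        apply Real.exp_le_exp.mpr
        nlinarith
      have hpow : 0 ≤ t ^ μ := Real.rpow_nonneg ht.le μ
      exact mul_le_mul_of_nonneg_left this hpow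
    · -- bound integrable
      have := real_kernel_int (s := μ + 1) (by linarith) hcpos
      simpa [IntegrableOn] using this
    · -- derivative
      refine Filter.Eventually.of_forall fun t => fun z hz => ?_
      have h1 : HasDerivAt (fun z : ℂ => -(z * (t : ℂ))) (-(t : ℂ)) z := by
        simpa [Pi.neg_def] using ((hasDerivAt_id z).mul_const ((t : ℂ))).neg
      exact (h1.cexp).const_mul _
  have hFdiff : DifferentiableOn ℂ F U := fun z hz =>
    ((hFderiv z hz).differentiableAt).differentiableWithinAt
  have hreal : ∀ r : ℝ, 0 < r → F ((r : ℝ) : ℂ) = G ((r : ℝ) : ℂ) := by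
    intro r hr
    have h := Complex.integral_cpow_mul_exp_neg_mul_Ioi
      (a := (μ : ℂ)) (r := r) (by simpa using hμ) hr
    rw [hF, hG]
    simp only []
    rw [h, one_div, Complex.inv_cpow _ _ (by
        rw [Complex.arg_ofReal_of_nonneg hr.le]; exact (Real.pi_ne_zero).symm),
      ← Complex.cpow_neg, Complex.Gamma_ofReal, mul_comm]
  have hfreq : ∃ᶠ z in nhdsWithin (1 : ℂ) {(1 : ℂ)}ᶜ, F z = G z := by
    have htend : Filter.Tendsto (fun n : ℕ => (((1 + ((n : ℝ) + 1)⁻¹ : ℝ)) : ℂ))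
        Filter.atTop (nhdsWithin (1 : ℂ) {(1 : ℂ)}ᶜ) := by
      apply tendsto_nhdsWithin_of_tendsto_nhds_of_eventually_within
      · have h1 : Filter.Tendsto (fun n : ℕ => (1 + ((n : ℝ) + 1)⁻¹ : ℝ))
            Filter.atTop (nhds 1) := by
          have := tendsto_one_div_add_atTop_nhds_zero_nat (𝕜 := ℝ)
          simp only [one_div] at this
          simpa using Filter.Tendsto.const_add (1 : ℝ) this
        have := (Complex.continuous_ofReal.tendsto (1 : ℝ)).comp h1
        simpa [Function.comp_def] using this
      · refine Filter.Eventually.of_forall fun n => ?_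
        simp only [Set.mem_compl_iff, Set.mem_singleton_iff]
        intro hcontra
        have : (1 + ((n : ℝ) + 1)⁻¹ : ℝ) = 1 := by exact_mod_cast hcontra
        have hpos : (0 : ℝ) < ((n : ℝ) + 1)⁻¹ := by positivity
        linarith
    refine htend.frequently (Filter.Frequently.of_forall fun n => ?_)
    exact hreal _ (by positivity)
  have heq : Set.EqOn F G U :=
    (hFdiff.analyticOnNhd hUopen).eqOn_of_preconnected_of_frequently_eq
      (hGdiff.analyticOnNhd hUopen) hUconv.isPreconnected
      (show (1 : ℂ) ∈ U by simp [hU]) hfreq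
  intro z hz
  exact heq hz

theorem stmt_5 (μ lam : ℝ) (hμ : 0 < μ) (hlam : 0 < lam)
    (u : ℝ → ℂ) (hu1 : Integrable u) (hu2 : MemLp u 2 volume) :
    ∀ ω : ℝ,
      (∫ x : ℝ, Complex.exp (-Complex.I * ω * x) *
        ((1 / (Real.Gamma μ : ℂ)) *
          ∫ ξ in Set.Iic x, ((x - ξ : ℝ) : ℂ) ^ (μ - 1 : ℂ) *
            Complex.exp (-lam * (x - ξ)) * u ξ)) =
      ((lam : ℂ) + Complex.I * ω) ^ (-(μ : ℂ)) *
        ∫ x : ℝ, Complex.exp (-Complex.I * ω * x) * u x := by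
  intro ω
  set a : ℂ := (lam : ℂ) + Complex.I * ω with ha
  have hare : 0 < a.re := by
    simp [ha, Complex.add_re, Complex.mul_re, hlam]
  have hΓpos := Real.Gamma_pos_of_pos hμ
  have hΓ : (Real.Gamma μ : ℂ) ≠ 0 := by exact_mod_cast hΓpos.ne'
  set e : ℝ → ℂ := fun x => Complex.exp (-Complex.I * ω * x) with he
  set k : ℝ → ℂ := fun t => (t : ℂ) ^ ((μ : ℂ) - 1) * Complex.exp (-(lam : ℂ) * t) with hk
  set g : ℝ → ℂ := Set.indicator (Set.Ioi 0) k with hg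
  have hkint : IntegrableOn k (Set.Ioi 0) := by
    have := cpx_kernel_int hμ (z := (lam : ℂ)) (by simpa using hlam)
    refine this.congr_fun (fun t _ => ?_) measurableSet_Ioi
    rw [hk]; ring_nf
  have hgint : Integrable g := by
    rw [hg]
    exact (integrable_indicator_iff measurableSet_Ioi).mpr hkint
  -- Step 1: rewrite inner integral as a convolution
  have hinner : ∀ x : ℝ,
      (∫ ξ in Set.Iic x, ((x - ξ : ℝ) : ℂ) ^ ((μ : ℂ) - 1) *
        Complex.exp (-(lam : ℂ) * ((x : ℂ) - (ξ : ℂ))) * u ξ)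
      = ∫ t : ℝ, g t * u (x - t) := by
    intro x
    set h : ℝ → ℂ := fun ξ => ((x - ξ : ℝ) : ℂ) ^ ((μ : ℂ) - 1) *
      Complex.exp (-(lam : ℂ) * ((x : ℂ) - (ξ : ℂ))) * u ξ with hh
    have step1 : (∫ ξ in Set.Iic x, h ξ) = ∫ ξ : ℝ, Set.indicator (Set.Iic x) h ξ :=
      (integral_indicator measurableSet_Iic).symm
    have step2 : (∫ ξ : ℝ, Set.indicator (Set.Iic x) h ξ)
        = ∫ t : ℝ, Set.indicator (Set.Iic x) h (x - t) :=
      (integral_sub_left_eq_self (Set.indicator (Set.Iic x) h) volume x).symm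
    rw [step1, step2]
    refine integral_congr_ae ?_
    have h0 : ∀ᵐ t : ℝ, t ≠ (0 : ℝ) := by
      refine ae_iff.mpr ?_
      simpa using measure_singleton (0 : ℝ)
    filter_upwards [h0] with t ht
    rcases lt_trichotomy t 0 with htneg | htzero | htpos
    · have h1 : x - t ∉ Set.Iic x := by simp; linarith
      have h2 : t ∉ Set.Ioi (0 : ℝ) := by simp; linarith
      rw [Set.indicator_of_notMem h1, hg, Set.indicator_of_notMem h2, zero_mul]
    · exact absurd htzero ht
    · have h1 : x - t ∈ Set.Iic x := by simp; linarith
      have h2 : t ∈ Set.Ioi (0 : ℝ) := htpos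
      rw [Set.indicator_of_mem h1, hg, Set.indicator_of_mem h2, hh, hk]
      have hxt : x - (x - t) = t := by ring
      simp only [hxt]
      push_cast
      ring_nf
  -- Fubini input
  have hprod : Integrable (Function.uncurry fun x t => e x * (g t * u (x - t)))
      (volume.prod volume) := by
    have base := MeasureTheory.Integrable.convolution_integrand
      (ContinuousLinearMap.mul ℝ ℂ) hgint hu1
    have hbase : Integrable (fun p : ℝ × ℝ => g p.2 * u (p.1 - p.2))
        (volume.prod volume) := base
    have haesm : AEStronglyMeasurable (fun p : ℝ × ℝ => e p.1) (volume.prod volume) := by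
      have : Continuous fun p : ℝ × ℝ => e p.1 := by
        rw [he]; fun_prop
      exact this.aestronglyMeasurable
    have := hbase.bdd_mul haesm (c := 1) (Filter.Eventually.of_forall fun p => by
      rw [he]
      simp only [Complex.norm_exp]
      have : (-Complex.I * (ω : ℂ) * (p.1 : ℂ)).re = 0 := by
        simp [Complex.mul_re, Complex.mul_im]
      rw [this, Real.exp_zero])
    exact this
  -- inner x-integral for fixed t
  have hxint : ∀ t : ℝ,
      (∫ x : ℝ, e x * (g t * u (x - t)))
        = (g t * Complex.exp (-Complex.I * ω * t)) * ∫ x : ℝ, e x * u x := by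
    intro t
    have step1 : (∫ x : ℝ, e x * (g t * u (x - t)))
        = g t * ∫ x : ℝ, e x * u (x - t) := by
      rw [← integral_const_mul]
      congr 1
      funext x
      ring
    rw [step1]
    have step2 : (∫ x : ℝ, e x * u (x - t))
        = Complex.exp (-Complex.I * ω * t) * ∫ x : ℝ, e x * u x := by
      have key : ∀ x : ℝ, e x * u (x - t)
          = Complex.exp (-Complex.I * ω * t) * (e (x - t) * u (x - t)) := by
        intro x
        rw [he]
        simp only []
        rw [← mul_assoc, ← Complex.exp_add]
        congr 2
        push_cast
        ring
      simp_rw [key]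
      rw [integral_const_mul]
      congr 1
      exact integral_sub_right_eq_self (fun y => e y * u y) t
    rw [step2]
    ring
  -- the Gamma integral
  have hgamma : (∫ t : ℝ, g t * Complex.exp (-Complex.I * ω * t))
      = (Real.Gamma μ : ℂ) * a ^ (-(μ : ℂ)) := by
    have step1 : (∫ t : ℝ, g t * Complex.exp (-Complex.I * ω * t))
        = ∫ t in Set.Ioi (0 : ℝ), k t * Complex.exp (-Complex.I * ω * t) := by
      rw [← integral_indicator measurableSet_Ioi]
      congr 1
      funext t
      rw [hg]
      by_cases ht : t ∈ Set.Ioi (0 : ℝ)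
      · rw [Set.indicator_of_mem ht, Set.indicator_of_mem ht]
      · rw [Set.indicator_of_notMem ht, Set.indicator_of_notMem ht, zero_mul]
    rw [step1]
    have step2 : (∫ t in Set.Ioi (0 : ℝ), k t * Complex.exp (-Complex.I * ω * t))
        = ∫ t in Set.Ioi (0 : ℝ), (t : ℂ) ^ ((μ : ℂ) - 1) * Complex.exp (-(a * t)) := by
      refine setIntegral_congr_fun measurableSet_Ioi (fun t _ => ?_)
      rw [hk, mul_assoc, ← Complex.exp_add]
      congr 2
      rw [ha]
      ring
    rw [step2]
    exact gamma_formula hμ a hare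
  -- put it all together
  have hfubini : (∫ x : ℝ, ∫ t : ℝ, e x * (g t * u (x - t)))
      = ∫ t : ℝ, ∫ x : ℝ, e x * (g t * u (x - t)) :=
    integral_integral_swap hprod
  calc
    (∫ x : ℝ, Complex.exp (-Complex.I * ω * x) *
        ((1 / (Real.Gamma μ : ℂ)) *
          ∫ ξ in Set.Iic x, ((x - ξ : ℝ) : ℂ) ^ ((μ : ℂ) - 1) *
            Complex.exp (-(lam : ℂ) * ((x : ℂ) - (ξ : ℂ))) * u ξ))
      = ∫ x : ℝ, (1 / (Real.Gamma μ : ℂ)) * (e x * ∫ t : ℝ, g t * u (x - t)) := by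
        refine integral_congr_ae (Filter.Eventually.of_forall fun x => ?_)
        dsimp only
        rw [hinner x, he]
        ring
    _ = (1 / (Real.Gamma μ : ℂ)) * ∫ x : ℝ, e x * ∫ t : ℝ, g t * u (x - t) := by
        rw [integral_const_mul]
    _ = (1 / (Real.Gamma μ : ℂ)) * ∫ x : ℝ, ∫ t : ℝ, e x * (g t * u (x - t)) := by
        congr 1
        refine integral_congr_ae (Filter.Eventually.of_forall fun x => ?_)
        dsimp only
        rw [← integral_const_mul]
    _ = (1 / (Real.Gamma μ : ℂ)) * ∫ t : ℝ, ∫ x : ℝ, e x * (g t * u (x - t)) := by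
        rw [hfubini]
    _ = (1 / (Real.Gamma μ : ℂ)) *
          ∫ t : ℝ, (g t * Complex.exp (-Complex.I * ω * t)) * ∫ x : ℝ, e x * u x := by
        congr 1
        refine integral_congr_ae (Filter.Eventually.of_forall fun t => ?_)
        dsimp only
        rw [hxint t]
    _ = (1 / (Real.Gamma μ : ℂ)) *
          ((∫ t : ℝ, g t * Complex.exp (-Complex.I * ω * t)) * ∫ x : ℝ, e x * u x) := by
        rw [integral_mul_const]
    _ = a ^ (-(μ : ℂ)) * ∫ x : ℝ, Complex.exp (-Complex.I * ω * x) * u x := by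
        rw [hgamma, he]
        field_simp
end

section
/- Fourier symbol of the right tempered fractional integral: for u ∈ L²(ℝ) ∩ L¹(ℝ) and μ, λ > 0, the Fourier transform of x ↦ ({}_xI_∞^{μ,λ}u)(x) equals ω ↦ (λ − iω)^{−μ}·û(ω). -/
open MeasureTheory Complex Set

lemma aux_real_int {s r : ℝ} (hs : 0 < s) (hr : 0 < r) :
    IntegrableOn (fun t : ℝ => Real.exp (-(r * t)) * t ^ (s - 1)) (Set.Ioi 0) := by
  have h : IntegrableOn (fun t : ℝ => Real.exp (-t) * t ^ (s - 1)) (Set.Ioi 0) :=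
    Real.GammaIntegral_convergent hs
  have h2 : IntegrableOn (fun t : ℝ => Real.exp (-(r*t)) * (r*t) ^ (s - 1)) (Set.Ioi 0) := by
    have := (integrableOn_Ioi_comp_mul_left_iff
      (fun t : ℝ => Real.exp (-t) * t ^ (s - 1)) 0 hr).2
    rw [mul_zero] at this
    exact this h
  have h3 : IntegrableOn
      (fun t : ℝ => r ^ (1-s) * (Real.exp (-(r*t)) * (r*t) ^ (s - 1))) (Set.Ioi 0) :=
    h2.const_mul (r ^ (1 - s))
  apply h3.congr_fun ?_ measurableSet_Ioi
  intro t ht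
  show r ^ (1-s) * (Real.exp (-(r*t)) * (r*t) ^ (s - 1)) = Real.exp (-(r*t)) * t ^ (s - 1)
  rw [Real.mul_rpow hr.le (le_of_lt ht)]
  rw [show r ^ (1-s) * (Real.exp (-(r*t)) * (r ^ (s-1) * t ^ (s-1)))
      = (r ^ (1-s) * r ^ (s-1)) * (Real.exp (-(r*t)) * t ^ (s-1)) by ring,
    ← Real.rpow_add hr]
  norm_num

lemma aux_cont (a b : ℂ) :
    ContinuousOn (fun t : ℝ => (t:ℂ) ^ (a - 1) * Complex.exp (-(b * t))) (Set.Ioi 0) := by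
  apply ContinuousOn.mul
  · apply continuousOn_of_forall_continuousAt
    intro x hx
    exact (continuousAt_cpow_const <| ofReal_mem_slitPlane.2 hx).comp
      continuous_ofReal.continuousAt
  · exact (Complex.continuous_exp.comp
      ((continuous_const.mul continuous_ofReal).neg)).continuousOn

lemma aux_norm {a b : ℂ} {t : ℝ} (ht : 0 < t) :
    ‖(t:ℂ) ^ (a - 1) * Complex.exp (-(b * t))‖
      = Real.exp (-(b.re * t)) * t ^ (a.re - 1) := by
  rw [norm_mul,
    Complex.norm_cpow_eq_rpow_re_of_pos ht, Complex.norm_exp]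
  have : (-(b * (t:ℂ))).re = -(b.re * t) := by
    simp [Complex.mul_re]
  rw [this, Complex.sub_re, Complex.one_re, mul_comm]

lemma aux_int {a b : ℂ} (ha : 0 < a.re) (hb : 0 < b.re) :
    IntegrableOn (fun t : ℝ => (t:ℂ) ^ (a - 1) * Complex.exp (-(b * t))) (Set.Ioi 0) := by
  apply Integrable.mono' (aux_real_int ha hb)
    ((aux_cont a b).aestronglyMeasurable measurableSet_Ioi)
  refine (ae_restrict_iff' measurableSet_Ioi).2 (Filter.Eventually.of_forall fun t ht => ?_)
  rw [aux_norm ht]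

lemma key_gamma {a : ℂ} (ha : 0 < a.re) {b : ℂ} (hb : 0 < b.re) :
    ∫ t : ℝ in Set.Ioi 0, (t:ℂ) ^ (a - 1) * Complex.exp (-(b * t))
      = (1/b) ^ a * Complex.Gamma a := by
  set U : Set ℂ := {z | 0 < z.re} with hU
  have hUo : IsOpen U := isOpen_lt continuous_const Complex.continuous_re
  have hUc : Convex ℝ U := convex_halfSpace_re_gt 0
  set F : ℂ → ℂ := fun z =>
    ∫ t : ℝ in Set.Ioi 0, (t:ℂ) ^ (a - 1) * Complex.exp (-(z * t)) with hF_def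
  set G : ℂ → ℂ := fun z => (1/z) ^ a * Complex.Gamma a with hG_def
  have hF : DifferentiableOn ℂ F U := by
    intro z₀ hz₀
    have hz₀re : 0 < z₀.re := hz₀
    set ε := z₀.re / 2 with hε
    have hε0 : 0 < ε := half_pos hz₀re
    have hball : ∀ z ∈ Metric.ball z₀ ε, ε < z.re := by
      intro z hz
      have h1 : |z.re - z₀.re| ≤ ‖z - z₀‖ := by
        simpa using Complex.abs_re_le_norm (z - z₀)
      have h2 : ‖z - z₀‖ < ε := by
        simpa [Metric.mem_ball, Complex.dist_eq] using hz
      have := (abs_lt.1 (lt_of_le_of_lt h1 h2)).1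
      simp only [hε] at this ⊢
      linarith
    have key := hasDerivAt_integral_of_dominated_loc_of_deriv_le (s := Metric.ball z₀ ε)
      (F := fun (z:ℂ) (t:ℝ) => (t:ℂ) ^ (a - 1) * Complex.exp (-(z * t)))
      (F' := fun (z:ℂ) (t:ℝ) => (t:ℂ) ^ (a - 1) * (Complex.exp (-(z * t)) * (-(t:ℂ))))
      (x₀ := z₀) (bound := fun t : ℝ => Real.exp (-(ε * t)) * t ^ ((a.re + 1) - 1))
      (μ := volume.restrict (Set.Ioi 0)) (Metric.ball_mem_nhds z₀ hε0)
      (Filter.Eventually.of_forall fun z =>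
        (aux_cont a z).aestronglyMeasurable measurableSet_Ioi)
      (aux_int ha hz₀re)
      ?_ ?_ ?_ ?_
    · exact (key.2.differentiableAt).differentiableWithinAt
    · -- measurability of F' z₀
      apply ContinuousOn.aestronglyMeasurable ?_ measurableSet_Ioi
      exact ((aux_cont a z₀).mul (Complex.continuous_ofReal.continuousOn.neg)).congr
        (fun t _ => by simp only [Pi.mul_apply, Pi.neg_apply]; ring)
    · -- bound
      refine (ae_restrict_iff' measurableSet_Ioi).2
        (Filter.Eventually.of_forall fun t ht => ?_)
      intro z hz
      have htpos : (0:ℝ) < t := ht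
      show ‖(t:ℂ) ^ (a - 1) * (Complex.exp (-(z * t)) * (-(t:ℂ)))‖
        ≤ Real.exp (-(ε * t)) * t ^ ((a.re + 1) - 1)
      have hnt : ‖(-(t:ℂ))‖ = t := by simp [abs_of_nonneg, htpos.le]
      rw [show (t:ℂ) ^ (a - 1) * (Complex.exp (-(z * t)) * (-(t:ℂ)))
          = ((t:ℂ) ^ (a - 1) * Complex.exp (-(z * t))) * (-(t:ℂ)) from by ring,
        norm_mul, aux_norm htpos, hnt]
      have h1 : Real.exp (-(z.re * t)) ≤ Real.exp (-(ε * t)) := by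
        apply Real.exp_le_exp.2
        have := hball z hz
        nlinarith
      have h2 : t ^ (a.re - 1) * t = t ^ ((a.re + 1) - 1) := by
        rw [show (a.re + 1) - 1 = (a.re - 1) + 1 by ring, Real.rpow_add htpos,
          Real.rpow_one]
      calc Real.exp (-(z.re * t)) * t ^ (a.re - 1) * t
          ≤ Real.exp (-(ε * t)) * t ^ (a.re - 1) * t := by
            apply mul_le_mul_of_nonneg_right (mul_le_mul_of_nonneg_right h1 _) htpos.le
            positivity
        _ = Real.exp (-(ε * t)) * t ^ ((a.re + 1) - 1) := by rw [mul_assoc, h2]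
    · exact aux_real_int (by linarith) hε0
    · -- HasDerivAt
      refine (ae_restrict_iff' measurableSet_Ioi).2
        (Filter.Eventually.of_forall fun t ht => ?_)
      intro z hz
      have h1 : HasDerivAt (fun z : ℂ => -(z * (t:ℂ))) (-(t:ℂ)) z := by
        exact (((hasDerivAt_id z).mul_const (t:ℂ)).neg).congr_deriv (by simp)
      exact (h1.cexp).const_mul ((t:ℂ) ^ (a - 1))
  have hG : DifferentiableOn ℂ G U := by
    intro z hz
    have hz0 : z ≠ 0 := by
      intro h; rw [h] at hz; simp [hU] at hz
    apply DifferentiableAt.differentiableWithinAt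
    apply DifferentiableAt.mul_const
    apply DifferentiableAt.cpow ((differentiableAt_const (1:ℂ)).div
      differentiableAt_id hz0) (differentiableAt_const a)
    left
    show 0 < (1 / z).re
    rw [one_div, Complex.inv_re]
    have : 0 < Complex.normSq z := Complex.normSq_pos.2 hz0
    have hzre : 0 < z.re := hz
    positivity
  have hfreq : ∃ᶠ z in nhdsWithin (1:ℂ) {(1:ℂ)}ᶜ, F z = G z := by
    have htend : Filter.Tendsto (fun n : ℕ => ((1 + 1/(n+1) : ℝ) : ℂ))
        Filter.atTop (nhdsWithin (1:ℂ) {(1:ℂ)}ᶜ) := by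
      rw [tendsto_nhdsWithin_iff]
      constructor
      · have : Filter.Tendsto (fun n : ℕ => (1 + 1/(n+1) : ℝ)) Filter.atTop (nhds 1) := by
          simpa using (tendsto_one_div_add_atTop_nhds_zero_nat (𝕜 := ℝ)).const_add 1
        have h2 := (Complex.continuous_ofReal.tendsto (1:ℝ)).comp this
        rw [show ((1:ℝ):ℂ) = 1 from Complex.ofReal_one] at h2
        exact h2
      · refine Filter.Eventually.of_forall fun n => ?_
        simp only [Set.mem_compl_iff, Set.mem_singleton_iff]
        intro h
        have : (1 + 1/(n+1) : ℝ) = 1 := by exact_mod_cast h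
        have hn : (0:ℝ) < 1/(n+1) := by positivity
        linarith
    apply htend.frequently
    apply Filter.Frequently.of_forall
    intro n
    have hrpos : (0:ℝ) < 1 + 1/(n+1) := by positivity
    exact Complex.integral_cpow_mul_exp_neg_mul_Ioi ha hrpos
  have heq : Set.EqOn F G U :=
    (hF.analyticOnNhd hUo).eqOn_of_preconnected_of_frequently_eq
      (hG.analyticOnNhd hUo) hUc.isPreconnected
      (show (1:ℂ) ∈ U by simp [hU]) hfreq
  exact heq hb

theorem stmt_6 (μ lam : ℝ) (hμ : 0 < μ) (hlam : 0 < lam)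
    (u : ℝ → ℂ) (hu1 : Integrable u) (hu2 : MemLp u 2 volume) :
    ∀ ω : ℝ,
      (∫ x : ℝ, Complex.exp (-Complex.I * ω * x) *
        ((1 / (Real.Gamma μ : ℂ)) *
          ∫ ξ in Set.Ici x, ((ξ - x : ℝ) : ℂ) ^ (μ - 1 : ℂ) *
            Complex.exp (-lam * (ξ - x)) * u ξ)) =
      ((lam : ℂ) - Complex.I * ω) ^ (-(μ : ℂ)) *
        ∫ x : ℝ, Complex.exp (-Complex.I * ω * x) * u x := by
  intro ω
  set b : ℂ := (lam : ℂ) - Complex.I * ω with hb_def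
  have hbre : 0 < b.re := by
    simp [hb_def, Complex.sub_re, Complex.mul_re, hlam]
  have hare : 0 < ((μ:ℂ)).re := by simpa using hμ
  set k : ℝ → ℂ := fun t => (t:ℂ) ^ ((μ:ℂ) - 1) * Complex.exp (-((lam:ℂ) * t)) with hk_def
  set KK : ℝ → ℂ := Set.indicator (Set.Ioi 0) k with hKK_def
  set e : ℝ → ℂ := fun x => Complex.exp (-Complex.I * ω * x) with he_def
  have hlamre : 0 < ((lam:ℂ)).re := by simpa using hlam
  have hkint : IntegrableOn k (Set.Ioi 0) := aux_int hare hlamre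
  have hKKint : Integrable KK := by
    rw [hKK_def, integrable_indicator_iff measurableSet_Ioi]
    exact hkint
  -- step 1 : rewrite inner integral
  have h1 : ∀ x : ℝ, (∫ ξ in Set.Ici x, ((ξ - x : ℝ) : ℂ) ^ (μ - 1 : ℂ) *
      Complex.exp (-lam * (ξ - x)) * u ξ) = ∫ ξ : ℝ, KK (ξ - x) * u ξ := by
    intro x
    rw [MeasureTheory.integral_Ici_eq_integral_Ioi,
      ← MeasureTheory.integral_indicator measurableSet_Ioi]
    congr 1
    funext ξ
    by_cases hξ : x < ξ
    · rw [Set.indicator_of_mem (show ξ ∈ Set.Ioi x from hξ), hKK_def,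
        Set.indicator_of_mem (by simpa using sub_pos.2 hξ : ξ - x ∈ Set.Ioi (0:ℝ)), hk_def]
      push_cast
      ring
    · rw [Set.indicator_of_notMem (show ξ ∉ Set.Ioi x from hξ), hKK_def,
        Set.indicator_of_notMem (by simpa using fun h => hξ (sub_pos.1 h))]
      simp
  -- product integrability
  have hP : Integrable (fun p : ℝ × ℝ => e p.1 * (u p.2 * KK (p.2 - p.1)))
      (volume.prod volume) := by
    have hconv : Integrable (fun p : ℝ × ℝ =>
        (ContinuousLinearMap.mul ℂ ℂ) (u p.2) ((fun t => KK (-t)) (p.1 - p.2)))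
        (volume.prod volume) :=
      hu1.convolution_integrand (ContinuousLinearMap.mul ℂ ℂ) hKKint.comp_neg
    have hconv2 : Integrable (fun p : ℝ × ℝ => u p.2 * KK (p.2 - p.1))
        (volume.prod volume) := by
      simpa [neg_sub] using hconv
    apply hconv2.bdd_mul (c := 1)
    · exact (Complex.continuous_exp.comp
        ((continuous_const.mul (continuous_ofReal.comp continuous_fst)))).aestronglyMeasurable
    · refine Filter.Eventually.of_forall (fun p => ?_)
      simp [he_def, Complex.norm_exp, Complex.mul_re, Complex.mul_im]
  -- inner x-integral
  have h2 : ∀ ξ : ℝ, (∫ x : ℝ, e x * KK (ξ - x))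
      = e ξ * ((1/b) ^ (μ:ℂ) * Complex.Gamma (μ:ℂ)) := by
    intro ξ
    have hsub : (∫ x : ℝ, e x * KK (ξ - x))
        = ∫ t : ℝ, e (ξ - t) * KK (ξ - (ξ - t)) := by
      exact (MeasureTheory.integral_sub_left_eq_self
        (fun x => e x * KK (ξ - x)) volume ξ).symm
    rw [hsub]
    have : ∀ t : ℝ, e (ξ - t) * KK (ξ - (ξ - t))
        = e ξ * (Complex.exp (Complex.I * ω * t) * KK t) := by
      intro t
      have : ξ - (ξ - t) = t := by ring
      rw [this, he_def]
      simp only []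
      rw [show (-Complex.I * ω * ((ξ:ℝ) - t : ℝ) : ℂ)
          = -Complex.I * ω * ξ + Complex.I * ω * t by push_cast; ring]
      rw [Complex.exp_add]
      ring
    simp_rw [this]
    rw [MeasureTheory.integral_const_mul]
    congr 1
    have hind : (fun t : ℝ => Complex.exp (Complex.I * ω * t) * KK t)
        = Set.indicator (Set.Ioi 0)
          (fun t : ℝ => (t:ℂ) ^ ((μ:ℂ) - 1) * Complex.exp (-(b * t))) := by
      funext t
      by_cases ht : t ∈ Set.Ioi (0:ℝ)
      · rw [Set.indicator_of_mem ht, hKK_def, Set.indicator_of_mem ht, hk_def]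
        rw [show (-(b * t) : ℂ) = -((lam:ℂ) * t) + Complex.I * ω * t by
          rw [hb_def]; push_cast; ring, Complex.exp_add]
        ring
      · rw [Set.indicator_of_notMem ht, hKK_def, Set.indicator_of_notMem ht, mul_zero]
    rw [hind, MeasureTheory.integral_indicator measurableSet_Ioi]
    exact key_gamma hare hbre
  -- assemble
  have hΓne : (Real.Gamma μ : ℂ) ≠ 0 := by
    exact_mod_cast (Real.Gamma_pos_of_pos hμ).ne'
  calc
    (∫ x : ℝ, e x * ((1 / (Real.Gamma μ : ℂ)) *
        ∫ ξ in Set.Ici x, ((ξ - x : ℝ) : ℂ) ^ (μ - 1 : ℂ) *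
          Complex.exp (-lam * (ξ - x)) * u ξ))
      = ∫ x : ℝ, (1 / (Real.Gamma μ : ℂ)) * ∫ ξ : ℝ, e x * (u ξ * KK (ξ - x)) := by
        congr 1; funext x
        rw [h1 x, ← MeasureTheory.integral_const_mul, ← MeasureTheory.integral_const_mul,
          ← MeasureTheory.integral_const_mul]
        congr 1; funext ξ; ring
    _ = (1 / (Real.Gamma μ : ℂ)) * ∫ x : ℝ, ∫ ξ : ℝ, e x * (u ξ * KK (ξ - x)) := by
        rw [MeasureTheory.integral_const_mul]
    _ = (1 / (Real.Gamma μ : ℂ)) * ∫ ξ : ℝ, ∫ x : ℝ, e x * (u ξ * KK (ξ - x)) := by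
        rw [MeasureTheory.integral_integral_swap hP]
    _ = (1 / (Real.Gamma μ : ℂ)) * ∫ ξ : ℝ, u ξ * ∫ x : ℝ, e x * KK (ξ - x) := by
        congr 1; apply MeasureTheory.integral_congr_ae; filter_upwards with ξ
        rw [← MeasureTheory.integral_const_mul]
        congr 1; funext x; ring
    _ = (1 / (Real.Gamma μ : ℂ)) * ∫ ξ : ℝ, u ξ *
          (e ξ * ((1/b) ^ (μ:ℂ) * Complex.Gamma (μ:ℂ))) := by
        simp_rw [h2]
    _ = ((1 / (Real.Gamma μ : ℂ)) * ((1/b) ^ (μ:ℂ) * Complex.Gamma (μ:ℂ))) *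
          ∫ ξ : ℝ, e ξ * u ξ := by
        simp_rw [show ∀ ξ:ℝ, u ξ * (e ξ * ((1/b) ^ (μ:ℂ) * Complex.Gamma (μ:ℂ)))
            = ((1/b) ^ (μ:ℂ) * Complex.Gamma (μ:ℂ)) * (e ξ * u ξ) from fun ξ => by ring,
          MeasureTheory.integral_const_mul]
        ring
    _ = b ^ (-(μ:ℂ)) * ∫ x : ℝ, e x * u x := by
        congr 1
        rw [Complex.Gamma_ofReal]
        rw [show (1 / (Real.Gamma μ : ℂ)) * ((1/b) ^ (μ:ℂ) * (Real.Gamma μ : ℂ))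
            = (1/b) ^ (μ:ℂ) * ((Real.Gamma μ : ℂ)⁻¹ * (Real.Gamma μ : ℂ)) by ring,
          inv_mul_cancel₀ hΓne, mul_one, one_div, Complex.inv_cpow, Complex.cpow_neg]
        intro h
        rw [Complex.arg_eq_pi_iff] at h
        linarith [h.1, hbre]
end
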